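/- Let P = [a] × [2b] with the described partial order and 1 ≤ t ≤ a-1. The simplicial complex Δ whose faces are the subsets of P containing no (t+1)-element chain is pure of dimension (a+b)t − 1: every facet has exactly (a+b)t elements. -/

import Mathlib

/-- A step moves one unit down `(1,0)` or one unit left `(0,-1)`. -/
def Step (p q : ℤ × ℤ) : Prop := q = p + (1, 0) ∨ q = p + (0, -1)

/-- `l` is a path starting at `p` and ending at `q`, each consecutive
difference being `(1,0)` or `(0,-1)`. -/
def IsPathFromTo (l : List (ℤ × ℤ)) (p q : ℤ × ℤ) : Prop :=
  l.Chain' Step ∧ l.head? = some p ∧ l.getLast? = some q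

/-- Membership in the poset `P = [a] × [2b]`, viewed inside `ℤ × ℤ`. -/
def memP (a b : ℕ) (p : ℤ × ℤ) : Prop :=
  1 ≤ p.1 ∧ p.1 ≤ (a : ℤ) ∧ 1 ≤ p.2 ∧ p.2 ≤ 2 * (b : ℤ)

/-- The partial order on `P = [a] × [2b]`:
`(x,y) ⪯ (z,t)` iff `(x,y) = (z,t)`, or `x < z` and `y < t`,
or `y ≤ b`, `t ≥ b+1` and `y < t - b`. -/
def ple (b : ℕ) (p q : ℤ × ℤ) : Prop :=
  p = q ∨ (p.1 < q.1 ∧ p.2 < q.2) ∨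
    (p.2 ≤ (b : ℤ) ∧ (b : ℤ) + 1 ≤ q.2 ∧ p.2 < q.2 - (b : ℤ))

def plt (b : ℕ) (p q : ℤ × ℤ) : Prop :=
  p.2 < q.2 ∧ (p.1 < q.1 ∨ p.2 + b < q.2)
open Finset
open scoped Classical
section machinery
variable {a b t : ℕ} {S : Finset (ℤ × ℤ)} {q : ℤ × ℤ}
lemma plt_irrefl (b : ℕ) (p : ℤ × ℤ) : ¬ plt b p p := by unfold plt; omega
lemma plt_trans {p q r : ℤ × ℤ} (h1 : plt b p q) (h2 : plt b q r) : plt b p r := by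
  unfold plt at *; omega
lemma plt_asymm {p q : ℤ × ℤ} (h1 : plt b p q) (h2 : plt b q p) : False := by
  unfold plt at *; omega
lemma ple_of_plt {p q : ℤ × ℤ} (hp : memP a b p) (hq : memP a b q) (h : plt b p q) :
    ple b p q := by unfold memP plt ple at *; omega
lemma plt_of_ple {p q : ℤ × ℤ} (h : ple b p q) (hne : p ≠ q) : plt b p q := by
  unfold ple plt at *
  rcases h with h | h | h
  · exact absurd h hne
  · omega
  · omega
def Fchain (b : ℕ) (c : Finset (ℤ × ℤ)) : Prop :=
  ∀ p ∈ c, ∀ q ∈ c, p = q ∨ plt b p q ∨ plt b q p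
lemma Fchain_subset {c d : Finset (ℤ × ℤ)} (h : Fchain b d) (hcd : c ⊆ d) : Fchain b c :=
  fun p hp q hq => h p (hcd hp) q (hcd hq)
lemma Fchain_empty : Fchain b (∅ : Finset (ℤ × ℤ)) := by intro p hp; simp at hp
lemma isChain_of_Fchain {c : Finset (ℤ × ℤ)} (hmem : ∀ p ∈ c, memP a b p)
    (h : Fchain b c) : IsChain (ple b) (c : Set (ℤ × ℤ)) := by
  intro p hp q hq hne
  rcases h p hp q hq with rfl | h' | h'
  · exact absurd rfl hne
  · exact Or.inl (ple_of_plt (hmem p hp) (hmem q hq) h')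
  · exact Or.inr (ple_of_plt (hmem q hq) (hmem p hp) h')
lemma Fchain_of_isChain {c : Finset (ℤ × ℤ)} (h : IsChain (ple b) (c : Set (ℤ × ℤ))) :
    Fchain b c := by
  intro p hp q hq
  by_cases hne : p = q
  · exact Or.inl hne
  · rcases h hp hq hne with h' | h'
    · exact Or.inr (Or.inl (plt_of_ple h' hne))
    · exact Or.inr (Or.inr (plt_of_ple h' (Ne.symm hne)))
noncomputable def chainsBelow (b : ℕ) (S : Finset (ℤ × ℤ)) (q : ℤ × ℤ) : Finset (Finset (ℤ × ℤ)) :=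
  S.powerset.filter (fun c => Fchain b c ∧ ∀ u ∈ c, plt b u q)
noncomputable def chainsAbove (b : ℕ) (S : Finset (ℤ × ℤ)) (q : ℤ × ℤ) : Finset (Finset (ℤ × ℤ)) :=
  S.powerset.filter (fun c => Fchain b c ∧ ∀ u ∈ c, plt b q u)
noncomputable def Hh (b : ℕ) (S : Finset (ℤ × ℤ)) (q : ℤ × ℤ) : ℕ :=
  1 + (chainsBelow b S q).sup Finset.card
noncomputable def Dd (b : ℕ) (S : Finset (ℤ × ℤ)) (q : ℤ × ℤ) : ℕ :=
  1 + (chainsAbove b S q).sup Finset.card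
lemma chainsBelow_nonempty (q : ℤ × ℤ) : (chainsBelow b S q).Nonempty :=
  ⟨∅, by simp [chainsBelow, Fchain_empty]⟩
lemma chainsAbove_nonempty (q : ℤ × ℤ) : (chainsAbove b S q).Nonempty :=
  ⟨∅, by simp [chainsAbove, Fchain_empty]⟩
lemma exists_max_chain_below (q : ℤ × ℤ) :
    ∃ c, c ⊆ S ∧ Fchain b c ∧ (∀ u ∈ c, plt b u q) ∧ c.card + 1 = Hh b S q := by
  obtain ⟨c, hc, hcard⟩ := Finset.exists_mem_eq_sup _ (chainsBelow_nonempty q) Finset.card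
  simp only [chainsBelow, mem_filter, mem_powerset] at hc
  exact ⟨c, hc.1, hc.2.1, hc.2.2, by simp [Hh, hcard]; omega⟩
lemma exists_max_chain_above (q : ℤ × ℤ) :
    ∃ c, c ⊆ S ∧ Fchain b c ∧ (∀ u ∈ c, plt b q u) ∧ c.card + 1 = Dd b S q := by
  obtain ⟨c, hc, hcard⟩ := Finset.exists_mem_eq_sup _ (chainsAbove_nonempty q) Finset.card
  simp only [chainsAbove, mem_filter, mem_powerset] at hc
  exact ⟨c, hc.1, hc.2.1, hc.2.2, by simp [Dd, hcard]; omega⟩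
lemma le_Hh {c : Finset (ℤ × ℤ)} (hc : c ⊆ S) (hch : Fchain b c)
    (hb : ∀ u ∈ c, plt b u q) : c.card + 1 ≤ Hh b S q := by
  have hm : c ∈ chainsBelow b S q := by
    simp only [chainsBelow, mem_filter, mem_powerset]; exact ⟨hc, hch, hb⟩
  have := Finset.le_sup (f := Finset.card) hm
  simp [Hh]; omega
lemma le_Dd {c : Finset (ℤ × ℤ)} (hc : c ⊆ S) (hch : Fchain b c)
    (hb : ∀ u ∈ c, plt b q u) : c.card + 1 ≤ Dd b S q := by
  have hm : c ∈ chainsAbove b S q := by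
    simp only [chainsAbove, mem_filter, mem_powerset]; exact ⟨hc, hch, hb⟩
  have := Finset.le_sup (f := Finset.card) hm
  simp [Dd]; omega

-- NEW PART BELOW --

lemma chain_union_cross {c d : Finset (ℤ × ℤ)} (hc : Fchain b c) (hd : Fchain b d)
    (hx : ∀ u ∈ c, ∀ v ∈ d, plt b u v) :
    Fchain b (c ∪ d) ∧ (c ∪ d).card = c.card + d.card := by
  constructor
  · intro p hp r hr
    rcases mem_union.mp hp with hp' | hp' <;> rcases mem_union.mp hr with hr' | hr'
    · exact hc p hp' r hr'
    · exact Or.inr (Or.inl (hx p hp' r hr'))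
    · exact Or.inr (Or.inr (hx r hr' p hp'))
    · exact hd p hp' r hr'
  · rw [Finset.card_union_of_disjoint]
    rw [Finset.disjoint_left]
    intro u huc hud
    exact plt_irrefl b u (hx u huc u hud)

/-- the face condition in Fchain form -/
lemma face' (hface : ∀ c : Finset (ℤ × ℤ), c ⊆ S → IsChain (ple b) (c : Set (ℤ × ℤ)) → c.card ≤ t)
    (hS : ∀ p ∈ S, memP a b p) {c : Finset (ℤ × ℤ)} (hc : c ⊆ S) (hch : Fchain b c) :
    c.card ≤ t :=
  hface c hc (isChain_of_Fchain (fun p hp => hS p (hc hp)) hch)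

/-- maximality: any point of P not in S has H + D ≥ t+2 -/
lemma maximality (hS : ∀ p ∈ S, memP a b p)
    (hface : ∀ c : Finset (ℤ × ℤ), c ⊆ S → IsChain (ple b) (c : Set (ℤ × ℤ)) → c.card ≤ t)
    (hmax : ∀ S' : Finset (ℤ × ℤ), (∀ p ∈ S', memP a b p) →
      (∀ c : Finset (ℤ × ℤ), c ⊆ S' → IsChain (ple b) (c : Set (ℤ × ℤ)) → c.card ≤ t) →
      S ⊆ S' → S = S')
    (hq : memP a b q) (hqS : q ∉ S) : t + 2 ≤ Hh b S q + Dd b S q := by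
  by_contra hcon
  push_neg at hcon
  have hS' : ∀ p ∈ insert q S, memP a b p := by
    intro p hp; rcases mem_insert.mp hp with rfl | hp'
    · exact hq
    · exact hS p hp'
  have hface' : ∀ c : Finset (ℤ × ℤ), c ⊆ insert q S →
      IsChain (ple b) (c : Set (ℤ × ℤ)) → c.card ≤ t := by
    intro c hc hch
    have hch' : Fchain b c := Fchain_of_isChain hch
    by_cases hqc : q ∈ c
    · -- split c
      set cb := c.filter (fun u => plt b u q) with hcb
      set ca := c.filter (fun u => plt b q u) with hca
      have hsub : c ⊆ cb ∪ {q} ∪ ca := by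
        intro u hu
        rcases hch' u hu q hqc with rfl | h' | h'
        · exact mem_union_left _ (mem_union_right _ (mem_singleton_self u))
        · exact mem_union_left _ (mem_union_left _ (mem_filter.mpr ⟨hu, h'⟩))
        · exact mem_union_right _ (mem_filter.mpr ⟨hu, h'⟩)
      have hcbS : cb ⊆ S := by
        intro u hu
        obtain ⟨huc, hlt⟩ := mem_filter.mp hu
        rcases mem_insert.mp (hc huc) with rfl | h
        · exact absurd hlt (plt_irrefl b u)
        · exact h
      have hcaS : ca ⊆ S := by
        intro u hu
        obtain ⟨huc, hlt⟩ := mem_filter.mp hu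
        rcases mem_insert.mp (hc huc) with rfl | h
        · exact absurd hlt (plt_irrefl b u)
        · exact h
      have h1 : cb.card + 1 ≤ Hh b S q :=
        le_Hh hcbS (Fchain_subset hch' (filter_subset _ _)) (fun u hu => (mem_filter.mp hu).2)
      have h2 : ca.card + 1 ≤ Dd b S q :=
        le_Dd hcaS (Fchain_subset hch' (filter_subset _ _)) (fun u hu => (mem_filter.mp hu).2)
      calc c.card ≤ (cb ∪ {q} ∪ ca).card := Finset.card_le_card hsub
        _ ≤ (cb ∪ {q}).card + ca.card := Finset.card_union_le _ _
        _ ≤ cb.card + 1 + ca.card := by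
              have := Finset.card_union_le cb ({q} : Finset (ℤ × ℤ))
              simp only [Finset.card_singleton] at this; omega
        _ ≤ t := by omega
    · have : c ⊆ S := by
        intro u hu
        rcases mem_insert.mp (hc hu) with rfl | h
        · exact absurd hu hqc
        · exact h
      exact face' hface hS this hch'
  have := hmax (insert q S) hS' hface' (subset_insert q S)
  exact hqS (this ▸ mem_insert_self q S)

/-- A step along a glued diagonal. -/
def Step' (a b : ℕ) (p q : ℤ × ℤ) : Prop :=
  (q.1 = p.1 + 1 ∧ q.2 = p.2 + 1) ∨ (p.1 = (a:ℤ) ∧ q.1 = 1 ∧ q.2 = p.2 + (b:ℤ) + 1)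

lemma step_plt {p q : ℤ × ℤ} (h : Step' a b p q) (hp : memP a b p) : plt b p q := by
  unfold Step' memP plt at *; omega

/-- empty interval: nothing strictly between a step -/
lemma step_EI {p q u : ℤ × ℤ} (h : Step' a b p q) (hu : memP a b u)
    (h1 : plt b p u) (h2 : plt b u q) : False := by
  unfold Step' memP plt at *; omega

/-- fringe absorption: if v is below q but not weakly below p, anything below v is below p -/
lemma step_FA {p q u v : ℤ × ℤ} (h : Step' a b p q)
    (hu : memP a b u) (hv : memP a b v)
    (hvq : plt b v q) (hvp : ¬ plt b v p) (hvne : v ≠ p)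
    (huv : plt b u v) : plt b u p := by
  obtain ⟨ux, uy⟩ := u; obtain ⟨vx, vy⟩ := v; obtain ⟨px, py⟩ := p; obtain ⟨qx, qy⟩ := q
  have hne : vx ≠ px ∨ vy ≠ py := by
    by_contra hc; push_neg at hc; exact hvne (by simp [hc.1, hc.2])
  unfold Step' memP plt at *; dsimp at *
  omega

/-- fringe below all above: if u is below q, not weakly below p, then u is below anything above p -/
lemma step_FB {p q u w : ℤ × ℤ} (h : Step' a b p q)
    (hu : memP a b u) (hw : memP a b w)
    (huq : plt b u q) (hup : ¬ plt b u p) (hune : u ≠ p)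
    (hpw : plt b p w) : plt b u w := by
  obtain ⟨ux, uy⟩ := u; obtain ⟨wx, wy⟩ := w; obtain ⟨px, py⟩ := p; obtain ⟨qx, qy⟩ := q
  have hne : ux ≠ px ∨ uy ≠ py := by
    by_contra hc; push_neg at hc; exact hune (by simp [hc.1, hc.2])
  unfold Step' memP plt at *; dsimp at *
  omega

lemma step_MFA {p q u v : ℤ × ℤ} (h : Step' a b p q)
    (hu : memP a b u) (hv : memP a b v)
    (hpv : plt b p v) (hqv : ¬ plt b q v) (hvne : v ≠ q)
    (hvu : plt b v u) : plt b q u := by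
  obtain ⟨ux, uy⟩ := u; obtain ⟨vx, vy⟩ := v; obtain ⟨px, py⟩ := p; obtain ⟨qx, qy⟩ := q
  have hne : vx ≠ qx ∨ vy ≠ qy := by
    by_contra hc; push_neg at hc; exact hvne (by simp [hc.1, hc.2])
  unfold Step' memP plt at *; dsimp at *
  omega

lemma step_MFB {p q v w : ℤ × ℤ} (h : Step' a b p q)
    (hv : memP a b v) (hw : memP a b w)
    (hpv : plt b p v) (hqv : ¬ plt b q v) (hvne : v ≠ q)
    (hwq : plt b w q) : plt b w v := by
  obtain ⟨vx, vy⟩ := v; obtain ⟨wx, wy⟩ := w; obtain ⟨px, py⟩ := p; obtain ⟨qx, qy⟩ := q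
  have hne : vx ≠ qx ∨ vy ≠ qy := by
    by_contra hc; push_neg at hc; exact hvne (by simp [hc.1, hc.2])
  unfold Step' memP plt at *; dsimp at *
  omega


end machinery

section steps
variable {a b t : ℕ} {S : Finset (ℤ × ℤ)}

lemma step_H (hS : ∀ p ∈ S, memP a b p)
    (hface : ∀ c : Finset (ℤ × ℤ), c ⊆ S → IsChain (ple b) (c : Set (ℤ × ℤ)) → c.card ≤ t)
    (hmax : ∀ S' : Finset (ℤ × ℤ), (∀ p ∈ S', memP a b p) →
      (∀ c : Finset (ℤ × ℤ), c ⊆ S' → IsChain (ple b) (c : Set (ℤ × ℤ)) → c.card ≤ t) →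
      S ⊆ S' → S = S')
    {p q : ℤ × ℤ} (hp : memP a b p) (hq : memP a b q) (hst : Step' a b p q) :
    Hh b S q ≤ Hh b S p + (if p ∈ S then 1 else 0) := by
  obtain ⟨c, hcS, hch, hbel, hcard⟩ := exists_max_chain_below (S := S) (b := b) q
  by_cases hfr : ∀ u ∈ c, u = p ∨ plt b u p
  · -- no fringe element
    have hc' : ∀ u ∈ c.erase p, plt b u p := by
      intro u hu
      obtain ⟨hne, huc⟩ := Finset.mem_erase.mp hu
      rcases hfr u huc with rfl | h
      · exact absurd rfl hne
      · exact h
    have h1 : (c.erase p).card + 1 ≤ Hh b S p :=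
      le_Hh (fun u hu => hcS (Finset.erase_subset _ _ hu))
        (Fchain_subset hch (Finset.erase_subset _ _)) hc'
    by_cases hpc : p ∈ c
    · have hpS : p ∈ S := hcS hpc
      rw [Finset.card_erase_of_mem hpc] at h1
      simp [hpS]
      omega
    · rw [Finset.erase_eq_of_notMem hpc] at h1
      split <;> omega
  · push_neg at hfr
    obtain ⟨u, huc, hune, hunp⟩ := hfr
    have huq : plt b u q := hbel u huc
    have huP : memP a b u := hS u (hcS huc)
    have hvu : ∀ v ∈ c, v ≠ u → plt b v u := by
      intro v hv hne
      rcases hch v hv u huc with rfl | h' | h'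
      · exact absurd rfl hne
      · exact h'
      · -- u below v : contradiction
        exfalso
        by_cases hvp : v = p
        · subst hvp; exact hunp h'
        · by_cases hvltp : plt b v p
          · exact hunp (plt_trans h' hvltp)
          · exact hunp (step_FA hst huP (hS v (hcS hv)) (hbel v hv) hvltp hvp h')
    have hc' : ∀ v ∈ c.erase u, plt b v p := by
      intro v hv
      obtain ⟨hne, hvc⟩ := Finset.mem_erase.mp hv
      exact step_FA hst (hS v (hcS hvc)) huP huq hunp hune (hvu v hvc hne)
    have h1 : (c.erase u).card + 1 ≤ Hh b S p :=
      le_Hh (fun w hw => hcS (Finset.erase_subset _ _ hw))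
        (Fchain_subset hch (Finset.erase_subset _ _)) hc'
    rw [Finset.card_erase_of_mem huc] at h1
    -- so c.card ≤ Hh p
    by_cases hpS : p ∈ S
    · simp [hpS]; omega
    · simp [hpS]
      -- need c.card + 1 ≤ Hh p; suppose not, then c.card = Hh p
      by_contra hcon
      have hceq : c.card = Hh b S p := by omega
      have hmaxineq := maximality hS hface hmax hp hpS
      obtain ⟨d, hdS, hdch, habv, hdcard⟩ := exists_max_chain_above (S := S) (b := b) p
      have hud : ∀ w ∈ d, plt b u w := fun w hw =>
        step_FB hst huP (hS w (hdS hw)) huq hunp hune (habv w hw)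
      have hcross : ∀ v ∈ c, ∀ w ∈ d, plt b v w := by
        intro v hv w hw
        by_cases hne : v = u
        · subst hne; exact hud w hw
        · exact plt_trans (hvu v hv hne) (hud w hw)
      obtain ⟨hech, hecard⟩ := chain_union_cross hch hdch hcross
      have hfb : (c ∪ d).card ≤ t :=
        face' hface hS (Finset.union_subset hcS hdS) hech
      omega

lemma step_D (hS : ∀ p ∈ S, memP a b p)
    (hface : ∀ c : Finset (ℤ × ℤ), c ⊆ S → IsChain (ple b) (c : Set (ℤ × ℤ)) → c.card ≤ t)
    (hmax : ∀ S' : Finset (ℤ × ℤ), (∀ p ∈ S', memP a b p) →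
      (∀ c : Finset (ℤ × ℤ), c ⊆ S' → IsChain (ple b) (c : Set (ℤ × ℤ)) → c.card ≤ t) →
      S ⊆ S' → S = S')
    {p q : ℤ × ℤ} (hp : memP a b p) (hq : memP a b q) (hst : Step' a b p q) :
    Dd b S p ≤ Dd b S q + (if q ∈ S then 1 else 0) := by
  obtain ⟨d, hdS, hdch, habv, hdcard⟩ := exists_max_chain_above (S := S) (b := b) p
  by_cases hfr : ∀ u ∈ d, u = q ∨ plt b q u
  · have hd' : ∀ u ∈ d.erase q, plt b q u := by
      intro u hu
      obtain ⟨hne, hud⟩ := Finset.mem_erase.mp hu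
      rcases hfr u hud with rfl | h
      · exact absurd rfl hne
      · exact h
    have h1 : (d.erase q).card + 1 ≤ Dd b S q :=
      le_Dd (fun u hu => hdS (Finset.erase_subset _ _ hu))
        (Fchain_subset hdch (Finset.erase_subset _ _)) hd'
    by_cases hqd : q ∈ d
    · have hqS : q ∈ S := hdS hqd
      rw [Finset.card_erase_of_mem hqd] at h1
      simp [hqS]
      omega
    · rw [Finset.erase_eq_of_notMem hqd] at h1
      split <;> omega
  · push_neg at hfr
    obtain ⟨v, hvd, hvne, hvnq⟩ := hfr
    have hpv : plt b p v := habv v hvd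
    have hvP : memP a b v := hS v (hdS hvd)
    have hvu : ∀ u ∈ d, u ≠ v → plt b v u := by
      intro u hu hne
      rcases hdch u hu v hvd with rfl | h' | h'
      · exact absurd rfl hne
      · -- u below v : contradiction
        exfalso
        by_cases huq : u = q
        · subst huq; exact hvnq h'
        · by_cases hqu : plt b q u
          · exact hvnq (plt_trans hqu h')
          · exact hvnq (step_MFA hst hvP (hS u (hdS hu)) (habv u hu) hqu huq h')
      · exact h'
    have hd' : ∀ u ∈ d.erase v, plt b q u := by
      intro u hu
      obtain ⟨hne, hud⟩ := Finset.mem_erase.mp hu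
      exact step_MFA hst (hS u (hdS hud)) hvP hpv hvnq hvne (hvu u hud (Ne.symm hne).symm)
    have h1 : (d.erase v).card + 1 ≤ Dd b S q :=
      le_Dd (fun w hw => hdS (Finset.erase_subset _ _ hw))
        (Fchain_subset hdch (Finset.erase_subset _ _)) hd'
    rw [Finset.card_erase_of_mem hvd] at h1
    by_cases hqS : q ∈ S
    · simp [hqS]; omega
    · simp [hqS]
      by_contra hcon
      have hdeq : d.card = Dd b S q := by omega
      have hmaxineq := maximality hS hface hmax hq hqS
      obtain ⟨c, hcS, hcch, hbel, hccard⟩ := exists_max_chain_below (S := S) (b := b) q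
      have hcv : ∀ w ∈ c, plt b w v := fun w hw =>
        step_MFB hst hvP (hS w (hcS hw)) hpv hvnq hvne (hbel w hw)
      have hcross : ∀ w ∈ c, ∀ u ∈ d, plt b w u := by
        intro w hw u hu
        by_cases hne : u = v
        · subst hne; exact hcv w hw
        · exact plt_trans (hcv w hw) (hvu u hu hne)
      obtain ⟨hech, hecard⟩ := chain_union_cross hcch hdch hcross
      have hfb : (c ∪ d).card ≤ t :=
        face' hface hS (Finset.union_subset hcS hdS) hech
      omega

/-- residue class of a point: which glued diagonal it lies on -/
def cls (a b : ℕ) (q : ℤ × ℤ) : ℤ := (q.2 - q.1) % ((a:ℤ) + b)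

lemma cls_step {p q : ℤ × ℤ} (hst : Step' a b p q) : cls a b p = cls a b q := by
  rcases hst with ⟨h1, h2⟩ | ⟨h1, h2, h3⟩
  · unfold cls; rw [h1, h2]; ring_nf
  · unfold cls
    have : q.2 - q.1 = (p.2 - p.1) + ((a:ℤ) + b) * 1 := by omega
    rw [this, Int.add_mul_emod_self_left]

lemma no_below_of_start {q u : ℤ × ℤ} (hq : memP a b q)
    (hs : (q.1 = 1 ∧ q.2 ≤ (b:ℤ) + 1) ∨ q.2 = 1) (hu : memP a b u) : ¬ plt b u q := by
  unfold memP plt at *; omega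

lemma no_above_of_top {q u : ℤ × ℤ} (hq : memP a b q)
    (hs : (q.1 = (a:ℤ) ∧ (b:ℤ) ≤ q.2) ∨ q.2 = 2 * (b:ℤ)) (hu : memP a b u) : ¬ plt b q u := by
  unfold memP plt at *; omega

lemma Hh_le_one (hS : ∀ u ∈ S, memP a b u) {q : ℤ × ℤ}
    (h : ∀ u, memP a b u → ¬ plt b u q) : Hh b S q ≤ 1 := by
  have : (chainsBelow b S q).sup Finset.card ≤ 0 := by
    apply Finset.sup_le
    intro c hc
    simp only [chainsBelow, mem_filter, mem_powerset] at hc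
    rcases Finset.eq_empty_or_nonempty c with rfl | ⟨u, hu⟩
    · simp
    · exact absurd (hc.2.2 u hu) (h u (hS u (hc.1 hu)))
  unfold Hh; omega

lemma Dd_le_one (hS : ∀ u ∈ S, memP a b u) {q : ℤ × ℤ}
    (h : ∀ u, memP a b u → ¬ plt b q u) : Dd b S q ≤ 1 := by
  have : (chainsAbove b S q).sup Finset.card ≤ 0 := by
    apply Finset.sup_le
    intro c hc
    simp only [chainsAbove, mem_filter, mem_powerset] at hc
    rcases Finset.eq_empty_or_nonempty c with rfl | ⟨u, hu⟩
    · simp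
    · exact absurd (hc.2.2 u hu) (h u (hS u (hc.1 hu)))
  unfold Dd; omega

lemma count_H (hab : a ≤ b) (hS : ∀ p ∈ S, memP a b p)
    (hface : ∀ c : Finset (ℤ × ℤ), c ⊆ S → IsChain (ple b) (c : Set (ℤ × ℤ)) → c.card ≤ t)
    (hmax : ∀ S' : Finset (ℤ × ℤ), (∀ p ∈ S', memP a b p) →
      (∀ c : Finset (ℤ × ℤ), c ⊆ S' → IsChain (ple b) (c : Set (ℤ × ℤ)) → c.card ≤ t) →
      S ⊆ S' → S = S') :
    ∀ (n : ℕ) (q : ℤ × ℤ), memP a b q → q.2.toNat ≤ n →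
      Hh b S q ≤ 1 + (S.filter (fun u => cls a b u = cls a b q ∧ plt b u q)).card := by
  intro n
  induction n with
  | zero =>
    intro q hq hle
    exfalso
    have h1 := hq.2.2.1
    omega
  | succ n ih =>
    intro q hq hle
    by_cases hstart : (q.1 = 1 ∧ q.2 ≤ (b:ℤ) + 1) ∨ q.2 = 1
    · have := Hh_le_one hS (fun u hu => no_below_of_start hq hstart hu)
      omega
    · push_neg at hstart
      obtain ⟨hqa, hqb, hqc, hqd⟩ := hq
      obtain ⟨p, hpP, hstp, hple⟩ :
          ∃ p : ℤ × ℤ, memP a b p ∧ Step' a b p q ∧ p.2 + 1 ≤ q.2 ∧ 0 ≤ p.2 := by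
        by_cases hq1 : q.1 = 1
        · have hx := hstart.1 hq1
          refine ⟨((a:ℤ), q.2 - (b:ℤ) - 1), ?_, ?_, ?_⟩
          · unfold memP; dsimp; omega
          · unfold Step'; dsimp; omega
          · dsimp; omega
        · refine ⟨(q.1 - 1, q.2 - 1), ?_, ?_, ?_⟩
          · unfold memP; dsimp; omega
          · unfold Step'; dsimp; omega
          · dsimp; omega
      have hq : memP a b q := ⟨hqa, hqb, hqc, hqd⟩
      have hcls : cls a b p = cls a b q := cls_step hstp
      have hmeas : p.2.toNat ≤ n := by omega
      have hHstep := step_H hS hface hmax hpP hq hstp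
      have hind := ih p hpP hmeas
      have hsubcnt : (S.filter (fun u => cls a b u = cls a b p ∧ plt b u p)).card
          + (if p ∈ S then 1 else 0)
          ≤ (S.filter (fun u => cls a b u = cls a b q ∧ plt b u q)).card := by
        have hsub : S.filter (fun u => cls a b u = cls a b p ∧ plt b u p)
            ⊆ S.filter (fun u => cls a b u = cls a b q ∧ plt b u q) := by
          intro u hu
          obtain ⟨huS, h1, h2⟩ := mem_filter.mp hu
          exact mem_filter.mpr ⟨huS, hcls ▸ h1, plt_trans h2 (step_plt hstp hpP)⟩
        by_cases hpS : p ∈ S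
        · have hins : insert p (S.filter (fun u => cls a b u = cls a b p ∧ plt b u p))
              ⊆ S.filter (fun u => cls a b u = cls a b q ∧ plt b u q) := by
            intro u hu
            rcases mem_insert.mp hu with rfl | hu'
            · exact mem_filter.mpr ⟨hpS, hcls, step_plt hstp hpP⟩
            · exact hsub hu'
          have hnotmem : p ∉ S.filter (fun u => cls a b u = cls a b p ∧ plt b u p) := by
            intro hmem
            exact plt_irrefl b p (mem_filter.mp hmem).2.2
          have := Finset.card_le_card hins
          rw [Finset.card_insert_of_notMem hnotmem] at this
          simp [hpS]
          omega
        · simp [hpS]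
          exact Finset.card_le_card hsub
      split at hHstep <;> split at hsubcnt <;> omega

lemma count_D (hab : a ≤ b) (hS : ∀ p ∈ S, memP a b p)
    (hface : ∀ c : Finset (ℤ × ℤ), c ⊆ S → IsChain (ple b) (c : Set (ℤ × ℤ)) → c.card ≤ t)
    (hmax : ∀ S' : Finset (ℤ × ℤ), (∀ p ∈ S', memP a b p) →
      (∀ c : Finset (ℤ × ℤ), c ⊆ S' → IsChain (ple b) (c : Set (ℤ × ℤ)) → c.card ≤ t) →
      S ⊆ S' → S = S') :
    ∀ (n : ℕ) (q : ℤ × ℤ), memP a b q → (2 * (b:ℤ) - q.2).toNat ≤ n →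
      Dd b S q ≤ 1 + (S.filter (fun u => cls a b u = cls a b q ∧ plt b q u)).card := by
  intro n
  induction n with
  | zero =>
    intro q hq hle
    have htop : (q.1 = (a:ℤ) ∧ (b:ℤ) ≤ q.2) ∨ q.2 = 2 * (b:ℤ) := by
      right
      have h1 := hq.2.2.2
      have h2 := hq.2.2.1
      omega
    have := Dd_le_one hS (fun u hu => no_above_of_top hq htop hu)
    omega
  | succ n ih =>
    intro q hq hle
    by_cases htop : (q.1 = (a:ℤ) ∧ (b:ℤ) ≤ q.2) ∨ q.2 = 2 * (b:ℤ)
    · have := Dd_le_one hS (fun u hu => no_above_of_top hq htop hu)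
      omega
    · push_neg at htop
      obtain ⟨hqa, hqb, hqc, hqd⟩ := hq
      obtain ⟨r, hrP, hstp, hrle⟩ :
          ∃ r : ℤ × ℤ, memP a b r ∧ Step' a b q r ∧ q.2 + 1 ≤ r.2 ∧ r.2 ≤ 2*(b:ℤ) := by
        by_cases hq1 : q.1 = (a:ℤ)
        · have hx := htop.1 hq1
          refine ⟨((1:ℤ), q.2 + (b:ℤ) + 1), ?_, ?_, ?_⟩
          · unfold memP; dsimp; omega
          · unfold Step'; dsimp; omega
          · dsimp; omega
        · have hx : q.2 ≤ 2*(b:ℤ) - 1 := by omega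
          refine ⟨(q.1 + 1, q.2 + 1), ?_, ?_, ?_⟩
          · unfold memP; dsimp; omega
          · unfold Step'; dsimp; omega
          · dsimp; omega
      have hq : memP a b q := ⟨hqa, hqb, hqc, hqd⟩
      have hcls : cls a b q = cls a b r := cls_step hstp
      have hmeas : (2 * (b:ℤ) - r.2).toNat ≤ n := by omega
      have hDstep := step_D hS hface hmax hq hrP hstp
      have hind := ih r hrP hmeas
      have hsubcnt : (S.filter (fun u => cls a b u = cls a b r ∧ plt b r u)).card
          + (if r ∈ S then 1 else 0)
          ≤ (S.filter (fun u => cls a b u = cls a b q ∧ plt b q u)).card := by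
        have hsub : S.filter (fun u => cls a b u = cls a b r ∧ plt b r u)
            ⊆ S.filter (fun u => cls a b u = cls a b q ∧ plt b q u) := by
          intro u hu
          obtain ⟨huS, h1, h2⟩ := mem_filter.mp hu
          exact mem_filter.mpr ⟨huS, hcls ▸ h1, plt_trans (step_plt hstp hq) h2⟩
        by_cases hrS : r ∈ S
        · have hins : insert r (S.filter (fun u => cls a b u = cls a b r ∧ plt b r u))
              ⊆ S.filter (fun u => cls a b u = cls a b q ∧ plt b q u) := by
            intro u hu
            rcases mem_insert.mp hu with rfl | hu'
            · exact mem_filter.mpr ⟨hrS, hcls.symm, step_plt hstp hq⟩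
            · exact hsub hu'
          have hnotmem : r ∉ S.filter (fun u => cls a b u = cls a b r ∧ plt b r u) := by
            intro hmem
            exact plt_irrefl b r (mem_filter.mp hmem).2.2
          have := Finset.card_le_card hins
          rw [Finset.card_insert_of_notMem hnotmem] at this
          simp [hrS]
          omega
        · simp [hrS]
          exact Finset.card_le_card hsub
      split at hDstep <;> split at hsubcnt <;> omega

lemma same_cls_comp (ha : 2 ≤ a) {u q : ℤ × ℤ} (hu : memP a b u) (hq : memP a b q)
    (hcls : cls a b u = cls a b q) (hne : u ≠ q) : plt b u q ∨ plt b q u := by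
  have hmod : (u.2 - u.1) ≡ (q.2 - q.1) [ZMOD ((a:ℤ)+b)] := hcls
  obtain ⟨k, hk⟩ := Int.ModEq.dvd hmod
  -- hk : q.2 - q.1 - (u.2 - u.1) = (↑a + ↑b) * k  (check direction)
  have hMpos : (0:ℤ) < (a:ℤ) + b := by
    have : (2:ℤ) ≤ (a:ℤ) := by exact_mod_cast ha
    omega
  obtain ⟨hua, hub, huc, hud⟩ := hu
  obtain ⟨hqa, hqb, hqc, hqd⟩ := hq
  have hklt : k < 2 := by
    by_contra h
    push_neg at h
    have h2 : ((a:ℤ)+b)*2 ≤ ((a:ℤ)+b)*k := by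
      apply mul_le_mul_of_nonneg_left h (le_of_lt hMpos)
    rw [← hk] at h2
    omega
  have hkgt : -2 < k := by
    by_contra h
    push_neg at h
    have h2 : ((a:ℤ)+b)*k ≤ ((a:ℤ)+b)*(-2) := by
      apply mul_le_mul_of_nonneg_left h (le_of_lt hMpos)
    rw [← hk] at h2
    omega
  have hcase : k = -1 ∨ k = 0 ∨ k = 1 := by omega
  have hnexy : u.1 ≠ q.1 ∨ u.2 ≠ q.2 := by
    by_contra hc
    push_neg at hc
    exact hne (Prod.ext hc.1 hc.2)
  unfold plt
  rcases hcase with rfl | rfl | rfl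
  · rw [show ((a:ℤ)+b)*(-1) = -(a:ℤ)-b by ring] at hk
    omega
  · rw [show ((a:ℤ)+b)*(0:ℤ) = 0 by ring] at hk
    omega
  · rw [show ((a:ℤ)+b)*(1:ℤ) = (a:ℤ)+b by ring] at hk
    omega

lemma fiber_card (ha : 2 ≤ a) (hab : a ≤ b) (ht1 : 1 ≤ t) (hta : t ≤ a - 1)
    (hS : ∀ p ∈ S, memP a b p)
    (hface : ∀ c : Finset (ℤ × ℤ), c ⊆ S → IsChain (ple b) (c : Set (ℤ × ℤ)) → c.card ≤ t)
    (hmax : ∀ S' : Finset (ℤ × ℤ), (∀ p ∈ S', memP a b p) →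
      (∀ c : Finset (ℤ × ℤ), c ⊆ S' → IsChain (ple b) (c : Set (ℤ × ℤ)) → c.card ≤ t) →
      S ⊆ S' → S = S')
    (j : ℤ) (hj0 : 0 ≤ j) (hjM : j < (a:ℤ) + b) :
    (S.filter (fun u => cls a b u = j)).card = t := by
  have hMpos : (0:ℤ) < (a:ℤ) + b := by omega
  -- upper bound : the fiber is a chain
  have hchF : Fchain b (S.filter (fun u => cls a b u = j)) := by
    intro u hu v hv
    obtain ⟨huS, hcu⟩ := mem_filter.mp hu
    obtain ⟨hvS, hcv⟩ := mem_filter.mp hv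
    by_cases hne : u = v
    · exact Or.inl hne
    · exact Or.inr (same_cls_comp ha (hS u huS) (hS v hvS) (hcu.trans hcv.symm) hne)
  have hup : (S.filter (fun u => cls a b u = j)).card ≤ t :=
    face' hface hS (filter_subset _ _) hchF
  -- probe points
  have hprobe : ∀ i : ℕ, i < a →
      memP a b ((i:ℤ)+1, (j + (i:ℤ)) % ((a:ℤ)+b) + 1) ∧
      cls a b ((i:ℤ)+1, (j + (i:ℤ)) % ((a:ℤ)+b) + 1) = j := by
    intro i hi
    have hi' : (i:ℤ) < (a:ℤ) := by exact_mod_cast hi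
    have he1 : 0 ≤ (j + (i:ℤ)) % ((a:ℤ)+b) := Int.emod_nonneg _ (ne_of_gt hMpos)
    have he2 : (j + (i:ℤ)) % ((a:ℤ)+b) < (a:ℤ)+b := Int.emod_lt_of_pos _ hMpos
    constructor
    · unfold memP; dsimp; omega
    · unfold cls; dsimp
      have harg : (j + (i:ℤ)) % ((a:ℤ)+b) + 1 - ((i:ℤ)+1) = (j + (i:ℤ)) % ((a:ℤ)+b) - (i:ℤ) := by
        ring
      rw [harg]
      calc ((j + (i:ℤ)) % ((a:ℤ)+b) - (i:ℤ)) % ((a:ℤ)+b)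
          = ((j + (i:ℤ)) % ((a:ℤ)+b) % ((a:ℤ)+b) - (i:ℤ) % ((a:ℤ)+b)) % ((a:ℤ)+b) := by
            rw [Int.sub_emod]
        _ = ((j + (i:ℤ)) % ((a:ℤ)+b) - (i:ℤ) % ((a:ℤ)+b)) % ((a:ℤ)+b) := by
            rw [Int.emod_emod_of_dvd _ dvd_rfl]
        _ = ((j + (i:ℤ)) - (i:ℤ)) % ((a:ℤ)+b) := by
            rw [← Int.sub_emod]
        _ = j % ((a:ℤ)+b) := by ring_nf
        _ = j := Int.emod_eq_of_lt hj0 hjM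
  -- there is a probe point not in S
  have hex : ∃ i : ℕ, i < a ∧ ((i:ℤ)+1, (j + (i:ℤ)) % ((a:ℤ)+b) + 1) ∉ S := by
    by_contra h
    push_neg at h
    have himg : (Finset.range a).image
        (fun i : ℕ => ((i:ℤ)+1, (j + (i:ℤ)) % ((a:ℤ)+b) + 1))
        ⊆ S.filter (fun u => cls a b u = j) := by
      intro u hu
      obtain ⟨i, hi, rfl⟩ := Finset.mem_image.mp hu
      rw [Finset.mem_range] at hi
      exact mem_filter.mpr ⟨h i hi, (hprobe i hi).2⟩
    have hinj : Set.InjOn (fun i : ℕ => (((i:ℤ)+1, (j + (i:ℤ)) % ((a:ℤ)+b) + 1) : ℤ × ℤ))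
        (Finset.range a) := by
      intro i hi i' hi' heq
      have : (i:ℤ) + 1 = (i':ℤ) + 1 := congrArg Prod.fst heq
      omega
    have hcard := Finset.card_image_of_injOn hinj
    rw [Finset.card_range] at hcard
    have := Finset.card_le_card himg
    omega
  obtain ⟨i, hia, hqS⟩ := hex
  obtain ⟨hqP, hqcls⟩ := hprobe i hia
  set q : ℤ × ℤ := ((i:ℤ)+1, (j + (i:ℤ)) % ((a:ℤ)+b) + 1) with hqdef
  have hHD := maximality hS hface hmax hqP hqS
  have hH := count_H hab hS hface hmax q.2.toNat q hqP le_rfl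
  have hD := count_D hab hS hface hmax (2*(b:ℤ) - q.2).toNat q hqP le_rfl
  -- below and above sets sit inside the fiber, disjointly
  set B := S.filter (fun u => cls a b u = cls a b q ∧ plt b u q) with hBdef
  set A := S.filter (fun u => cls a b u = cls a b q ∧ plt b q u) with hAdef
  have hdisj : Disjoint B A := by
    rw [Finset.disjoint_left]
    intro u huB huA
    exact plt_asymm (mem_filter.mp huB).2.2 (mem_filter.mp huA).2.2
  have hunion : B ∪ A ⊆ S.filter (fun u => cls a b u = j) := by
    intro u hu
    rcases mem_union.mp hu with hu' | hu'
    · obtain ⟨huS, hc, _⟩ := mem_filter.mp hu'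
      exact mem_filter.mpr ⟨huS, hc.trans hqcls⟩
    · obtain ⟨huS, hc, _⟩ := mem_filter.mp hu'
      exact mem_filter.mpr ⟨huS, hc.trans hqcls⟩
  have hlow : B.card + A.card ≤ (S.filter (fun u => cls a b u = j)).card := by
    rw [← Finset.card_union_of_disjoint hdisj]
    exact Finset.card_le_card hunion
  omega
end steps


theorem stmt_15 (a b t : ℕ) (ha : 2 ≤ a) (hab : a ≤ b) (ht1 : 1 ≤ t) (hta : t ≤ a - 1)
    (S : Finset (ℤ × ℤ)) (hS : ∀ p ∈ S, memP a b p)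
    (hface : ∀ c : Finset (ℤ × ℤ), c ⊆ S → IsChain (ple b) (c : Set (ℤ × ℤ)) → c.card ≤ t)
    (hmax : ∀ S' : Finset (ℤ × ℤ), (∀ p ∈ S', memP a b p) →
      (∀ c : Finset (ℤ × ℤ), c ⊆ S' → IsChain (ple b) (c : Set (ℤ × ℤ)) → c.card ≤ t) →
      S ⊆ S' → S = S') :
    S.card = (a + b) * t := by
  classical
  have hMpos : (0:ℤ) < (a:ℤ) + b := by
    have : (2:ℤ) ≤ (a:ℤ) := by exact_mod_cast ha
    omega
  have hmem : ∀ u ∈ S, (cls a b u).toNat ∈ Finset.range (a + b) := by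
    intro u _
    have h1 : 0 ≤ cls a b u := Int.emod_nonneg _ (ne_of_gt hMpos)
    have h2 : cls a b u < (a:ℤ) + b := Int.emod_lt_of_pos _ hMpos
    rw [Finset.mem_range]
    omega
  have hsum := Finset.card_eq_sum_card_fiberwise hmem
  rw [hsum]
  have hfib : ∀ n ∈ Finset.range (a + b),
      (S.filter (fun u => (cls a b u).toNat = n)).card = t := by
    intro n hn
    rw [Finset.mem_range] at hn
    have hEq : S.filter (fun u => (cls a b u).toNat = n)
        = S.filter (fun u => cls a b u = (n:ℤ)) := by
      apply Finset.filter_congr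
      intro u _
      have h1 : 0 ≤ cls a b u := Int.emod_nonneg _ (ne_of_gt hMpos)
      constructor
      · intro h; omega
      · intro h; omega
    rw [hEq]
    apply fiber_card ha hab ht1 hta hS hface hmax (n:ℤ) (by positivity)
    have : (n:ℤ) < ((a+b:ℕ):ℤ) := by exact_mod_cast hn
    push_cast at this
    omega
  rw [Finset.sum_congr rfl hfib]
  simp [Finset.sum_const, Finset.card_range, mul_comm]
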